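/- Let G be the graph on vertex set [5] with edge set E(G) = {{1,2},{2,3},{3,4},{1,4},{1,5},{4,5}}, so d = 11. Define the segments F^1 = conv{a_{{2}}, a_{{1,3}}}, F^2 = conv{a_{{3}}, a_{{2,4}}}, F^3 = conv{a_{{5}}, a_{{1}}}, F^4 = conv{a_{{5}}, a_{{4}}} in ℝ^11. Then: (a) each F^b is a face of P(G); (b) the point a ∈ ℝ^11 with a_i = 1 for all i ∈ [5] and a_e = 0 for all e ∈ E(G) lies in the Minkowski sum F^1 + F^2 + F^3 + F^4, and it is the unique point x of F^1 + F^2 + F^3 + F^4 with π(x) = (1,1,1,1,1); (c) there is no choice of endpoints q^b of the segments F^b (b = 1,…,4) with π(q^1 + q^2 + q^3 + q^4) = (1,1,1,1,1). Hence for non-complete value graphs, a competitive equilibrium at the bundle (1,1,1,1,1) may fail to exist. -/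

import Mathlib

/-- Coordinates of `ℝ^11` for the graph `G` on vertex set `[5]` (encoded as
`Fin 5 = {0,…,4}`) with the six edges
`{1,2},{2,3},{3,4},{1,4},{1,5},{4,5}` (1-indexed), i.e.
`{0,1},{1,2},{2,3},{0,3},{0,4},{3,4}` (0-indexed). -/
abbrev Coord17 : Type := Fin 5 ⊕ Fin 6

/-- The endpoints of the six edges of `G` (0-indexed). -/
def edge17 : Fin 6 → Fin 5 × Fin 5 :=
  ![(0, 1), (1, 2), (2, 3), (0, 3), (0, 4), (3, 4)]

/-- The characteristic vector `a_S` of `S ⊆ [5]` for the graph `G`. -/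
def cv17 (S : Finset (Fin 5)) : Coord17 → ℝ
  | Sum.inl i => if i ∈ S then 1 else 0
  | Sum.inr t => if (edge17 t).1 ∈ S ∧ (edge17 t).2 ∈ S then 1 else 0

/-- The polytope `P(G)`. -/
def poly17 : Set (Coord17 → ℝ) := convexHull ℝ (Set.range cv17)

/-- The standard inner product on `ℝ^11`. -/
def dot17 (x y : Coord17 → ℝ) : ℝ := ∑ c, x c * y c

/-- `F` is a face of `P(G)`. -/
def IsFace17 (F : Set (Coord17 → ℝ)) : Prop :=
  ∃ c : Coord17 → ℝ,
    F = {x | x ∈ poly17 ∧ ∀ y ∈ poly17, dot17 c y ≤ dot17 c x}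

/-- First endpoints of the four segments: `a_{{2}}, a_{{3}}, a_{{5}}, a_{{5}}`
(1-indexed). -/
def u17 : Fin 4 → (Coord17 → ℝ) := ![cv17 {1}, cv17 {2}, cv17 {4}, cv17 {4}]

/-- Second endpoints of the four segments:
`a_{{1,3}}, a_{{2,4}}, a_{{1}}, a_{{4}}` (1-indexed). -/
def v17 : Fin 4 → (Coord17 → ℝ) :=
  ![cv17 {0, 2}, cv17 {1, 3}, cv17 {0}, cv17 {3}]

/-- The four segments `F^1, …, F^4`. -/
def F17 (b : Fin 4) : Set (Coord17 → ℝ) := segment ℝ (u17 b) (v17 b)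

/-- The point `a` with `a_i = 1` for all vertices and `a_e = 0` for all edges. -/
def a17 : Coord17 → ℝ
  | Sum.inl _ => 1
  | Sum.inr _ => 0

-- auxiliary evaluation lemmas
lemma e0 : edge17 0 = (0,1) := rfl
lemma e1 : edge17 1 = (1,2) := rfl
lemma e2 : edge17 2 = (2,3) := rfl
lemma e3 : edge17 3 = (0,3) := rfl
lemma e4 : edge17 4 = (0,4) := rfl
lemma e5 : edge17 5 = (3,4) := rfl

lemma u0 : u17 0 = cv17 {1} := rfl
lemma u1 : u17 1 = cv17 {2} := rfl
lemma u2 : u17 2 = cv17 {4} := rfl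
lemma u3 : u17 3 = cv17 {4} := rfl
lemma v0 : v17 0 = cv17 {0, 2} := rfl
lemma v1 : v17 1 = cv17 {1, 3} := rfl
lemma v2 : v17 2 = cv17 {0} := rfl
lemma v3 : v17 3 = cv17 {3} := rfl

lemma dot_cv (c : Coord17 → ℝ) (S : Finset (Fin 5)) :
    dot17 c (cv17 S) =
      (if (0:Fin 5) ∈ S then c (.inl 0) else 0)
      + (if (1:Fin 5) ∈ S then c (.inl 1) else 0)
      + (if (2:Fin 5) ∈ S then c (.inl 2) else 0)
      + (if (3:Fin 5) ∈ S then c (.inl 3) else 0)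
      + (if (4:Fin 5) ∈ S then c (.inl 4) else 0)
      + (if (0:Fin 5) ∈ S ∧ (1:Fin 5) ∈ S then c (.inr 0) else 0)
      + (if (1:Fin 5) ∈ S ∧ (2:Fin 5) ∈ S then c (.inr 1) else 0)
      + (if (2:Fin 5) ∈ S ∧ (3:Fin 5) ∈ S then c (.inr 2) else 0)
      + (if (0:Fin 5) ∈ S ∧ (3:Fin 5) ∈ S then c (.inr 3) else 0)
      + (if (0:Fin 5) ∈ S ∧ (4:Fin 5) ∈ S then c (.inr 4) else 0)
      + (if (3:Fin 5) ∈ S ∧ (4:Fin 5) ∈ S then c (.inr 5) else 0) := by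
  simp only [dot17, cv17, Fintype.sum_sum_type, Fin.sum_univ_five, Fin.sum_univ_six,
    e0, e1, e2, e3, e4, e5, mul_ite, mul_one, mul_zero]
  simp only [add_assoc]
  rfl

lemma hlin17 (c : Coord17 → ℝ) : IsLinearMap ℝ (dot17 c) := by
  constructor
  · intro x y
    simp [dot17, mul_add, Finset.sum_add_distrib]
  · intro a x
    simp only [dot17, Pi.smul_apply, smul_eq_mul, Finset.mul_sum]
    exact Finset.sum_congr rfl fun i _ => by ring

lemma mem_poly17 (S : Finset (Fin 5)) : cv17 S ∈ poly17 :=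
  subset_convexHull ℝ _ ⟨S, rfl⟩

lemma face_seg (c : Coord17 → ℝ) (S1 S2 : Finset (Fin 5))
    (hmax : ∀ S, dot17 c (cv17 S) ≤ dot17 c (cv17 S1))
    (heq : dot17 c (cv17 S2) = dot17 c (cv17 S1))
    (hstrict : ∀ S, dot17 c (cv17 S) = dot17 c (cv17 S1) → S = S1 ∨ S = S2) :
    segment ℝ (cv17 S1) (cv17 S2) =
      {x | x ∈ poly17 ∧ ∀ y ∈ poly17, dot17 c y ≤ dot17 c x} := by
  have hlin := hlin17 c
  have hhalf : ∀ y ∈ poly17, dot17 c y ≤ dot17 c (cv17 S1) := by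
    intro y hy
    have hsub : poly17 ⊆ {z | dot17 c z ≤ dot17 c (cv17 S1)} :=
      convexHull_min (by rintro z ⟨S, rfl⟩; exact hmax S) (convex_halfSpace_le hlin _)
    exact hsub hy
  ext x
  constructor
  · rintro ⟨a, b, ha, hb, hab, rfl⟩
    refine ⟨(convex_convexHull ℝ _) (mem_poly17 S1) (mem_poly17 S2) ha hb hab, ?_⟩
    intro y hy
    have hval : dot17 c (a • cv17 S1 + b • cv17 S2) = dot17 c (cv17 S1) := by
      rw [hlin.map_add, hlin.map_smul, hlin.map_smul, heq, smul_eq_mul, smul_eq_mul,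
        ← add_mul, hab, one_mul]
    rw [hval]
    exact hhalf y hy
  · rintro ⟨hx, hm⟩
    set T : Finset (Coord17 → ℝ) := Finset.univ.image cv17 with hTdef
    have hTcoe : (↑T : Set (Coord17 → ℝ)) = Set.range cv17 := by
      simp [hTdef]
    have hx' : x ∈ convexHull ℝ (↑T : Set (Coord17 → ℝ)) := by rw [hTcoe]; exact hx
    rw [Finset.convexHull_eq] at hx'
    obtain ⟨w, hw0, hw1, hxw⟩ := hx'
    rw [Finset.centerMass_eq_of_sum_1 _ _ hw1] at hxw
    have hdx : dot17 c x = dot17 c (cv17 S1) :=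
      le_antisymm (hhalf x hx) (hm _ (mem_poly17 S1))
    set L : (Coord17 → ℝ) →ₗ[ℝ] ℝ := IsLinearMap.mk' _ hlin with hLdef
    have h1 : dot17 c x = ∑ y ∈ T, w y * dot17 c y := by
      rw [← hxw]
      show L (∑ y ∈ T, w y • id y) = _
      rw [map_sum]
      exact Finset.sum_congr rfl fun y _ => by
        simp [hLdef, IsLinearMap.mk'_apply, hlin.map_smul]
    have hsum : ∑ y ∈ T, w y * (dot17 c (cv17 S1) - dot17 c y) = 0 := by
      simp only [mul_sub]
      rw [Finset.sum_sub_distrib, ← Finset.sum_mul, hw1, one_mul, ← h1, hdx, sub_self]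
    have hterm : ∀ y ∈ T, w y * (dot17 c (cv17 S1) - dot17 c y) = 0 := by
      refine (Finset.sum_eq_zero_iff_of_nonneg ?_).mp hsum
      intro y hy
      obtain ⟨S, _, rfl⟩ := Finset.mem_image.mp hy
      exact mul_nonneg (hw0 _ hy) (sub_nonneg.2 (hmax S))
    have hkey : ∀ y ∈ T, w y ≠ 0 → y ∈ ({cv17 S1, cv17 S2} : Set (Coord17 → ℝ)) := by
      intro y hy hwne
      obtain ⟨S, _, rfl⟩ := Finset.mem_image.mp hy
      rcases mul_eq_zero.mp (hterm _ hy) with h | h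
      · exact absurd h hwne
      · have hS : dot17 c (cv17 S) = dot17 c (cv17 S1) := by linarith
        rcases hstrict S hS with rfl | rfl
        · exact Set.mem_insert _ _
        · exact Set.mem_insert_iff.2 (Or.inr rfl)
    have hxseg : x ∈ convexHull ℝ ({cv17 S1, cv17 S2} : Set (Coord17 → ℝ)) := by
      rw [← hxw, ← Finset.centerMass_eq_of_sum_1 _ _ hw1,
        ← Finset.centerMass_filter_ne_zero]
      apply Finset.centerMass_mem_convexHull
      · exact fun y hy => hw0 y (Finset.mem_filter.mp hy).1
      · rw [Finset.sum_filter_ne_zero, hw1]; norm_num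
      · intro y hy
        obtain ⟨hyT, hwy⟩ := Finset.mem_filter.mp hy
        exact hkey y hyT hwy
    rwa [convexHull_pair] at hxseg


def c0 : Coord17 → ℝ := Sum.elim ![1, 2, 1, -10, -10] (fun _ => -10)

lemma c0l0 : c0 (.inl 0) = 1 := rfl
lemma c0l1 : c0 (.inl 1) = 2 := rfl
lemma c0l2 : c0 (.inl 2) = 1 := rfl
lemma c0l3 : c0 (.inl 3) = -10 := rfl
lemma c0l4 : c0 (.inl 4) = -10 := rfl
lemma c0r (t : Fin 6) : c0 (.inr t) = -10 := rfl

lemma hmax0 (S : Finset (Fin 5)) : dot17 c0 (cv17 S) ≤ dot17 c0 (cv17 {1}) := by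
  rw [dot_cv, dot_cv]
  simp only [c0l0, c0l1, c0l2, c0l3, c0l4, c0r]
  by_cases h0 : (0:Fin 5) ∈ S <;> by_cases h1 : (1:Fin 5) ∈ S <;>
    by_cases h2 : (2:Fin 5) ∈ S <;> by_cases h3 : (3:Fin 5) ∈ S <;>
    by_cases h4 : (4:Fin 5) ∈ S <;>
    simp [h0, h1, h2, h3, h4] <;> norm_num

lemma heq0 : dot17 c0 (cv17 {0, 2}) = dot17 c0 (cv17 {1}) := by
  rw [dot_cv, dot_cv]
  simp only [c0l0, c0l1, c0l2, c0l3, c0l4, c0r]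
  simp <;> norm_num

lemma hstrict0 (S : Finset (Fin 5)) (h : dot17 c0 (cv17 S) = dot17 c0 (cv17 {1})) :
    S = {1} ∨ S = {0, 2} := by
  rw [dot_cv, dot_cv] at h
  simp only [c0l0, c0l1, c0l2, c0l3, c0l4, c0r] at h
  by_cases h0 : (0:Fin 5) ∈ S <;> by_cases h1 : (1:Fin 5) ∈ S <;>
    by_cases h2 : (2:Fin 5) ∈ S <;> by_cases h3 : (3:Fin 5) ∈ S <;>
    by_cases h4 : (4:Fin 5) ∈ S <;>
    first
      | (simp [h0, h1, h2, h3, h4] at h <;> norm_num at h <;> done)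
      | (left; ext x; fin_cases x <;> simp [h0, h1, h2, h3, h4] <;> done)
      | (right; ext x; fin_cases x <;> simp [h0, h1, h2, h3, h4] <;> done)

def c1 : Coord17 → ℝ := Sum.elim ![-10, 1, 2, 1, -10] (fun _ => -10)

lemma c1l0 : c1 (.inl 0) = -10 := rfl
lemma c1l1 : c1 (.inl 1) = 1 := rfl
lemma c1l2 : c1 (.inl 2) = 2 := rfl
lemma c1l3 : c1 (.inl 3) = 1 := rfl
lemma c1l4 : c1 (.inl 4) = -10 := rfl
lemma c1r (t : Fin 6) : c1 (.inr t) = -10 := rfl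

lemma hmax1 (S : Finset (Fin 5)) : dot17 c1 (cv17 S) ≤ dot17 c1 (cv17 {2}) := by
  rw [dot_cv, dot_cv]
  simp only [c1l0, c1l1, c1l2, c1l3, c1l4, c1r]
  by_cases h0 : (0:Fin 5) ∈ S <;> by_cases h1 : (1:Fin 5) ∈ S <;>
    by_cases h2 : (2:Fin 5) ∈ S <;> by_cases h3 : (3:Fin 5) ∈ S <;>
    by_cases h4 : (4:Fin 5) ∈ S <;>
    simp [h0, h1, h2, h3, h4] <;> norm_num

lemma heq1 : dot17 c1 (cv17 {1, 3}) = dot17 c1 (cv17 {2}) := by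
  rw [dot_cv, dot_cv]
  simp only [c1l0, c1l1, c1l2, c1l3, c1l4, c1r]
  simp <;> norm_num

lemma hstrict1 (S : Finset (Fin 5)) (h : dot17 c1 (cv17 S) = dot17 c1 (cv17 {2})) :
    S = {2} ∨ S = {1, 3} := by
  rw [dot_cv, dot_cv] at h
  simp only [c1l0, c1l1, c1l2, c1l3, c1l4, c1r] at h
  by_cases h0 : (0:Fin 5) ∈ S <;> by_cases h1 : (1:Fin 5) ∈ S <;>
    by_cases h2 : (2:Fin 5) ∈ S <;> by_cases h3 : (3:Fin 5) ∈ S <;>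
    by_cases h4 : (4:Fin 5) ∈ S <;>
    first
      | (simp [h0, h1, h2, h3, h4] at h <;> norm_num at h <;> done)
      | (left; ext x; fin_cases x <;> simp [h0, h1, h2, h3, h4] <;> done)
      | (right; ext x; fin_cases x <;> simp [h0, h1, h2, h3, h4] <;> done)

def c2 : Coord17 → ℝ := Sum.elim ![1, -10, -10, -10, 1] (fun _ => -10)

lemma c2l0 : c2 (.inl 0) = 1 := rfl
lemma c2l1 : c2 (.inl 1) = -10 := rfl
lemma c2l2 : c2 (.inl 2) = -10 := rfl
lemma c2l3 : c2 (.inl 3) = -10 := rfl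
lemma c2l4 : c2 (.inl 4) = 1 := rfl
lemma c2r (t : Fin 6) : c2 (.inr t) = -10 := rfl

lemma hmax2 (S : Finset (Fin 5)) : dot17 c2 (cv17 S) ≤ dot17 c2 (cv17 {4}) := by
  rw [dot_cv, dot_cv]
  simp only [c2l0, c2l1, c2l2, c2l3, c2l4, c2r]
  by_cases h0 : (0:Fin 5) ∈ S <;> by_cases h1 : (1:Fin 5) ∈ S <;>
    by_cases h2 : (2:Fin 5) ∈ S <;> by_cases h3 : (3:Fin 5) ∈ S <;>
    by_cases h4 : (4:Fin 5) ∈ S <;>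
    simp [h0, h1, h2, h3, h4] <;> norm_num

lemma heq2 : dot17 c2 (cv17 {0}) = dot17 c2 (cv17 {4}) := by
  rw [dot_cv, dot_cv]
  simp only [c2l0, c2l1, c2l2, c2l3, c2l4, c2r]
  simp <;> norm_num

lemma hstrict2 (S : Finset (Fin 5)) (h : dot17 c2 (cv17 S) = dot17 c2 (cv17 {4})) :
    S = {4} ∨ S = {0} := by
  rw [dot_cv, dot_cv] at h
  simp only [c2l0, c2l1, c2l2, c2l3, c2l4, c2r] at h
  by_cases h0 : (0:Fin 5) ∈ S <;> by_cases h1 : (1:Fin 5) ∈ S <;>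
    by_cases h2 : (2:Fin 5) ∈ S <;> by_cases h3 : (3:Fin 5) ∈ S <;>
    by_cases h4 : (4:Fin 5) ∈ S <;>
    first
      | (simp [h0, h1, h2, h3, h4] at h <;> norm_num at h <;> done)
      | (left; ext x; fin_cases x <;> simp [h0, h1, h2, h3, h4] <;> done)
      | (right; ext x; fin_cases x <;> simp [h0, h1, h2, h3, h4] <;> done)

def c3 : Coord17 → ℝ := Sum.elim ![-10, -10, -10, 1, 1] (fun _ => -10)

lemma c3l0 : c3 (.inl 0) = -10 := rfl
lemma c3l1 : c3 (.inl 1) = -10 := rfl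
lemma c3l2 : c3 (.inl 2) = -10 := rfl
lemma c3l3 : c3 (.inl 3) = 1 := rfl
lemma c3l4 : c3 (.inl 4) = 1 := rfl
lemma c3r (t : Fin 6) : c3 (.inr t) = -10 := rfl

lemma hmax3 (S : Finset (Fin 5)) : dot17 c3 (cv17 S) ≤ dot17 c3 (cv17 {4}) := by
  rw [dot_cv, dot_cv]
  simp only [c3l0, c3l1, c3l2, c3l3, c3l4, c3r]
  by_cases h0 : (0:Fin 5) ∈ S <;> by_cases h1 : (1:Fin 5) ∈ S <;>
    by_cases h2 : (2:Fin 5) ∈ S <;> by_cases h3 : (3:Fin 5) ∈ S <;>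
    by_cases h4 : (4:Fin 5) ∈ S <;>
    simp [h0, h1, h2, h3, h4] <;> norm_num

lemma heq3 : dot17 c3 (cv17 {3}) = dot17 c3 (cv17 {4}) := by
  rw [dot_cv, dot_cv]
  simp only [c3l0, c3l1, c3l2, c3l3, c3l4, c3r]
  simp <;> norm_num

lemma hstrict3 (S : Finset (Fin 5)) (h : dot17 c3 (cv17 S) = dot17 c3 (cv17 {4})) :
    S = {4} ∨ S = {3} := by
  rw [dot_cv, dot_cv] at h
  simp only [c3l0, c3l1, c3l2, c3l3, c3l4, c3r] at h
  by_cases h0 : (0:Fin 5) ∈ S <;> by_cases h1 : (1:Fin 5) ∈ S <;>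
    by_cases h2 : (2:Fin 5) ∈ S <;> by_cases h3 : (3:Fin 5) ∈ S <;>
    by_cases h4 : (4:Fin 5) ∈ S <;>
    first
      | (simp [h0, h1, h2, h3, h4] at h <;> norm_num at h <;> done)
      | (left; ext x; fin_cases x <;> simp [h0, h1, h2, h3, h4] <;> done)
      | (right; ext x; fin_cases x <;> simp [h0, h1, h2, h3, h4] <;> done)

lemma uv_edge (b : Fin 4) (e : Fin 6) :
    u17 b (Sum.inr e) = 0 ∧ v17 b (Sum.inr e) = 0 := by
  fin_cases b <;> fin_cases e <;>
    refine ⟨?_, ?_⟩ <;>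
    simp [u0, u1, u2, u3, v0, v1, v2, v3, cv17, e0, e1, e2, e3, e4, e5]

/-- **Example 3.2.** (a) Each `F^b` is a face of `P(G)`; (b) the point `a`
lies in the Minkowski sum `F^1 + F^2 + F^3 + F^4` and is the unique point of
that sum projecting to `(1,1,1,1,1)`; (c) no choice of endpoints of the
segments sums to a point projecting to `(1,1,1,1,1)`. Hence a competitive
equilibrium at the bundle `(1,1,1,1,1)` may fail for non-complete value
graphs. -/
theorem stmt17 :
    (∀ b, IsFace17 (F17 b)) ∧
    (∃ x : Fin 4 → (Coord17 → ℝ), (∀ b, x b ∈ F17 b) ∧ (∑ b, x b) = a17) ∧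
    (∀ x : Fin 4 → (Coord17 → ℝ), (∀ b, x b ∈ F17 b) →
      (∀ i : Fin 5, (∑ b, x b) (Sum.inl i) = 1) → (∑ b, x b) = a17) ∧
    ¬ ∃ q : Fin 4 → (Coord17 → ℝ),
        (∀ b, q b = u17 b ∨ q b = v17 b) ∧
        (∀ i : Fin 5, (∑ b, q b) (Sum.inl i) = 1) := by
  refine ⟨?_, ?_, ?_, ?_⟩
  · -- part (a)
    intro b
    fin_cases b
    · exact ⟨c0, face_seg c0 {1} {0, 2} hmax0 heq0 hstrict0⟩
    · exact ⟨c1, face_seg c1 {2} {1, 3} hmax1 heq1 hstrict1⟩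
    · exact ⟨c2, face_seg c2 {4} {0} hmax2 heq2 hstrict2⟩
    · exact ⟨c3, face_seg c3 {4} {3} hmax3 heq3 hstrict3⟩
  · -- part (b): midpoints
    refine ⟨fun b => (2⁻¹ : ℝ) • u17 b + (2⁻¹ : ℝ) • v17 b, fun b =>
      ⟨2⁻¹, 2⁻¹, by norm_num, by norm_num, by norm_num, rfl⟩, ?_⟩
    funext cc
    cases cc with
    | inl i =>
      simp only [Fin.sum_univ_four, Pi.add_apply, Pi.smul_apply, smul_eq_mul,
        u0, u1, u2, u3, v0, v1, v2, v3, a17]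
      fin_cases i <;> simp [cv17] <;> norm_num
    | inr e =>
      simp only [Fin.sum_univ_four, Pi.add_apply, Pi.smul_apply, smul_eq_mul,
        u0, u1, u2, u3, v0, v1, v2, v3, a17]
      rw [show cv17 {1} (Sum.inr e) = 0 from (uv_edge 0 e).1,
        show cv17 {0,2} (Sum.inr e) = 0 from (uv_edge 0 e).2,
        show cv17 {2} (Sum.inr e) = 0 from (uv_edge 1 e).1,
        show cv17 {1,3} (Sum.inr e) = 0 from (uv_edge 1 e).2,
        show cv17 {4} (Sum.inr e) = 0 from (uv_edge 2 e).1,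
        show cv17 {0} (Sum.inr e) = 0 from (uv_edge 2 e).2,
        show cv17 {3} (Sum.inr e) = 0 from (uv_edge 3 e).2]
      norm_num
  · -- uniqueness
    intro x hx hvert
    funext cc
    cases cc with
    | inl i => simpa [a17] using hvert i
    | inr e =>
      have hz : ∀ b, x b (Sum.inr e) = 0 := by
        intro b
        obtain ⟨s, t, hs, ht, hst, hxb⟩ := hx b
        rw [← hxb]
        simp [(uv_edge b e).1, (uv_edge b e).2]
      simp [Fin.sum_univ_four, hz, a17]
  · -- part (c)
    rintro ⟨q, hq, hv⟩
    have E := And.intro (hv 0) (And.intro (hv 1) (And.intro (hv 3) (hv 4)))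
    rcases hq 0 with h0 | h0 <;> rcases hq 1 with h1 | h1 <;>
      rcases hq 2 with h2 | h2 <;> rcases hq 3 with h3 | h3 <;>
      simp [Fin.sum_univ_four, h0, h1, h2, h3, Pi.add_apply,
        u0, u1, u2, u3, v0, v1, v2, v3, cv17] at E <;>
      norm_num at E
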